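/- If G is a connected finite simple graph with no even cycle, and u, v are two vertices lying on a common cycle of G at distance 2 along that cycle, then the graph G' = KT(G, u, v) obtained by the Kelmans transformation with beneficiary u also has no even cycle. -/

import Mathlib

open Polynomial

/-- Number of matchings with exactly `k` edges in `G`. -/
noncomputable def matchingCount {V : Type*} [Fintype V] (G : SimpleGraph V) (k : ℕ) : ℕ :=
  Nat.card {s : Finset (Sym2 V) // s.card = k ∧ (∀ e ∈ s, e ∈ G.edgeSet) ∧
    ∀ e ∈ s, ∀ f ∈ s, e ≠ f → ∀ x : V, x ∈ e → x ∉ f}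

/-- The matching polynomial `m(G,x) = ∑ (-1)^k m_k(G) x^(n-2k)`. -/
noncomputable def matchPoly {V : Type*} [Fintype V] (G : SimpleGraph V) : Polynomial ℝ :=
  ∑ k ∈ Finset.range (Fintype.card V + 1),
    Polynomial.C ((-1 : ℝ) ^ k * (matchingCount G k : ℝ)) *
      Polynomial.X ^ (Fintype.card V - 2 * k)

/-- The maximum real root `t(G)` of the matching polynomial. -/
noncomputable def maxRoot {V : Type*} [Fintype V] (G : SimpleGraph V) : ℝ :=
  sSup {x : ℝ | (matchPoly G).eval x = 0}

/-- `w` is a neighbour of `v` that gets moved to `u` by the Kelmans transformation. -/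
def movedNbr {V : Type*} (G : SimpleGraph V) (u v w : V) : Prop :=
  G.Adj v w ∧ w ≠ u ∧ ¬ G.Adj u w

/-- The Kelmans transformation of `G` with beneficiary `u` and co-beneficiary `v`:
every edge `vw` with `w ≠ u`, `w` not adjacent to `u`, is replaced by the edge `uw`. -/
def kelmans {V : Type*} (G : SimpleGraph V) (u v : V) : SimpleGraph V where
  Adj a b :=
    (G.Adj a b ∧ ¬ (a = v ∧ movedNbr G u v b) ∧ ¬ (b = v ∧ movedNbr G u v a))
    ∨ (a = u ∧ movedNbr G u v b) ∨ (b = u ∧ movedNbr G u v a)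
  symm := by
    constructor
    intro a b h
    rcases h with ⟨h1, h2, h3⟩ | h | h
    · exact Or.inl ⟨h1.symm, h3, h2⟩
    · exact Or.inr (Or.inr h)
    · exact Or.inr (Or.inl h)
  loopless := by
    constructor
    intro a h
    rcases h with ⟨h1, _, _⟩ | ⟨rfl, _, hne, _⟩ | ⟨rfl, _, hne, _⟩
    · exact G.irrefl h1
    · exact hne rfl
    · exact hne rfl

namespace KelmansProof

open SimpleGraph Walk

variable {V : Type*}

lemma kelmans_adj {G : SimpleGraph V} {u v x y : V} :
    (kelmans G u v).Adj x y ↔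
      (G.Adj x y ∧ ¬ (x = v ∧ movedNbr G u v y) ∧ ¬ (y = v ∧ movedNbr G u v x))
        ∨ (x = u ∧ movedNbr G u v y) ∨ (y = u ∧ movedNbr G u v x) := Iff.rfl

lemma adj_of_ne {G : SimpleGraph V} {u v x y : V} (h : (kelmans G u v).Adj x y)
    (hx : x ≠ u) (hy : y ≠ u) : G.Adj x y := by
  rcases kelmans_adj.mp h with ⟨h, -, -⟩ | ⟨rfl, -⟩ | ⟨rfl, -⟩
  · exact h
  · exact absurd rfl hx
  · exact absurd rfl hy

lemma adj_u_cases {G : SimpleGraph V} {u v z : V} (h : (kelmans G u v).Adj u z) :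
    G.Adj u z ∨ movedNbr G u v z := by
  rcases kelmans_adj.mp h with ⟨h, -, -⟩ | ⟨-, hm⟩ | ⟨rfl, hm⟩
  · exact Or.inl h
  · exact Or.inr hm
  · exact absurd rfl hm.2.1

lemma one_le_length_of_ne {G : SimpleGraph V} {x y : V} (h : x ≠ y) (p : G.Walk x y) :
    1 ≤ p.length := by
  cases p with
  | nil => exact absurd rfl h
  | cons _ q => rw [Walk.length_cons]; omega

lemma path_loop {G : SimpleGraph V} {x : V} {p : G.Walk x x} (hp : p.IsPath) :
    p.length = 0 := by
  cases p with
  | nil => rfl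
  | cons h q =>
    rw [Walk.cons_isPath_iff] at hp
    exact absurd q.end_mem_support hp.2

lemma length_one {G : SimpleGraph V} {x y : V} {p : G.Walk x y} (hp : p.IsPath)
    (he : s(x, y) ∈ p.edges) : p.length = 1 := by
  cases p with
  | nil => simp at he
  | @cons _ b _ h q =>
    rw [Walk.edges_cons, List.mem_cons] at he
    rw [Walk.cons_isPath_iff] at hp
    rcases he with he | he
    · rw [Sym2.eq_iff] at he
      rcases he with ⟨-, rfl⟩ | ⟨rfl, rfl⟩
      · have : q.length = 0 := path_loop hp.1
        rw [Walk.length_cons, this]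
      · exact absurd rfl h.ne
    · exact absurd (q.fst_mem_support_of_mem_edges he) hp.2

lemma closeCycle {G : SimpleGraph V} {x y : V} (hxy : x ≠ y) {p : G.Walk x y}
    {q : G.Walk y x} (hp : p.IsPath) (hq : q.IsPath)
    (hint : ∀ z, z ∈ p.support → z ∈ q.support → z = x ∨ z = y)
    (hlen : 3 ≤ p.length + q.length) : (p.append q).IsCycle := by
  have hxp : x ∉ p.support.tail := by
    have h := hp.support_nodup
    rw [p.support_eq_cons] at h
    exact (List.nodup_cons.mp h).1
  have hyq : y ∉ q.support.tail := by
    have h := hq.support_nodup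
    rw [q.support_eq_cons] at h
    exact (List.nodup_cons.mp h).1
  rw [Walk.isCycle_def]
  refine ⟨?_, ?_, ?_⟩
  · rw [Walk.isTrail_def, Walk.edges_append, List.nodup_append']
    refine ⟨hp.isTrail.edges_nodup, hq.isTrail.edges_nodup, ?_⟩
    intro e hep heq
    revert hep heq
    induction e using Sym2.ind with
    | _ cc dd =>
      intro hep heq
      have hcd : G.Adj cc dd := p.adj_of_mem_edges hep
      have h1 := hint cc (p.fst_mem_support_of_mem_edges hep)
        (q.fst_mem_support_of_mem_edges heq)
      have h2 := hint dd (p.snd_mem_support_of_mem_edges hep)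
        (q.snd_mem_support_of_mem_edges heq)
      have hexy : s(cc, dd) = s(x, y) := by
        rcases h1 with rfl | rfl <;> rcases h2 with rfl | rfl
        · exact absurd rfl hcd.ne
        · rfl
        · exact Sym2.eq_swap
        · exact absurd rfl hcd.ne
      rw [hexy] at hep heq
      have l1 := length_one hp hep
      have l2 := length_one hq (by rwa [Sym2.eq_swap] at heq)
      omega
  · intro hnil
    have h0 : (p.append q).length = 0 := by rw [hnil]; rfl
    rw [Walk.length_append] at h0
    omega
  · rw [Walk.tail_support_append, List.nodup_append']
    refine ⟨hp.support_nodup.tail, hq.support_nodup.tail, ?_⟩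
    intro zz hz1 hz2
    rcases hint zz (List.mem_of_mem_tail hz1) (List.mem_of_mem_tail hz2) with rfl | rfl
    · exact hxp hz1
    · exact hyq hz2

lemma exists_firstHit {G : SimpleGraph V} {a b : V} (p : G.Walk a b) (T : Set V)
    (hb : b ∈ T) :
    ∃ (m : V) (qq : G.Walk a m) (r : G.Walk m b), p = qq.append r ∧ m ∈ T ∧
      ∀ x ∈ qq.support, x ∈ T → x = m := by
  classical
  revert hb
  induction p with
  | nil =>
    intro hb
    refine ⟨_, Walk.nil, Walk.nil, rfl, hb, ?_⟩
    intro x hx _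
    simpa using hx
  | @cons a' c' b' h pp ih =>
    intro hb
    by_cases ha : a' ∈ T
    · refine ⟨a', Walk.nil, Walk.cons h pp, rfl, ha, ?_⟩
      intro x hx _
      simpa using hx
    · obtain ⟨m, qq, r, heq, hm, hfin⟩ := ih hb
      refine ⟨m, Walk.cons h qq, r, by rw [heq, Walk.cons_append], hm, ?_⟩
      intro x hx hxT
      rw [Walk.support_cons, List.mem_cons] at hx
      rcases hx with rfl | hx
      · exact absurd hxT ha
      · exact hfin x hx hxT

lemma take_drop_inter {G : SimpleGraph V} [DecidableEq V] {a b cc : V} {p : G.Walk a b}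
    (hp : p.IsPath) (h : cc ∈ p.support) :
    ∀ z, z ∈ (p.takeUntil cc h).support → z ∈ (p.dropUntil cc h).support → z = cc := by
  intro z hz1 hz2
  have hs := hp.support_nodup
  rw [← Walk.take_spec p h, Walk.support_append, List.nodup_append'] at hs
  rw [Walk.support_eq_cons (p.dropUntil cc h), List.mem_cons] at hz2
  rcases hz2 with rfl | hz2
  · rfl
  · exact absurd hz2 (hs.2.2 hz1)

lemma mem_support_rotate {G : SimpleGraph V} [DecidableEq V] {r x : V} (C : G.Walk r r)
    (h : x ∈ C.support) : ∀ z, z ∈ (C.rotate x h).support ↔ z ∈ C.support := by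
  intro z
  conv_rhs => rw [← Walk.take_spec C h]
  rw [Walk.rotate, Walk.mem_support_append_iff, Walk.mem_support_append_iff]
  tauto

lemma length_rotate {G : SimpleGraph V} [DecidableEq V] {r x : V} (C : G.Walk r r)
    (h : x ∈ C.support) : (C.rotate x h).length = C.length := by
  conv_rhs => rw [← Walk.take_spec C h]
  rw [Walk.rotate, Walk.length_append, Walk.length_append]
  omega

lemma ear_lemma {G : SimpleGraph V} [DecidableEq V]
    (hodd : ∀ (z : V) (c : G.Walk z z), c.IsCycle → ¬ Even c.length)
    {r s t : V} (C : G.Walk r r) (hC : C.IsCycle) (hs : s ∈ C.support)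
    (Q : G.Walk s t) (hQ : Q.IsPath) (ht : t ∈ C.support) (hst : s ≠ t)
    (hint : ∀ x ∈ Q.support, x ∈ C.support → x = s ∨ x = t)
    (hlenQ : 2 ≤ Q.length) : False := by
  have hC2 : (C.rotate s hs).IsCycle := hC.rotate hs
  have h3 := hC2.three_le_length
  have hmem : ∀ z, z ∈ (C.rotate s hs).support ↔ z ∈ C.support := mem_support_rotate C hs
  have hlenC : (C.rotate s hs).length = C.length := length_rotate C hs
  have hnn : ¬ (C.rotate s hs).Nil := by rw [Walk.nil_iff_length_eq]; omega
  obtain ⟨s₁, h₁, p, hE⟩ := Walk.not_nil_iff.mp hnn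
  rw [hE] at hC2 hmem hlenC
  rw [Walk.cons_isCycle_iff] at hC2
  obtain ⟨hppath, -⟩ := hC2
  have htp : t ∈ p.support := by
    have h := (hmem t).mpr ht
    rw [Walk.support_cons, List.mem_cons] at h
    rcases h with h | h
    · exact absurd h.symm hst
    · exact h
  set α := p.takeUntil t htp with hα_def
  set β := p.dropUntil t htp with hβ_def
  have hβ : β.IsPath := hppath.dropUntil htp
  have hα : α.IsPath := hppath.takeUntil htp
  have hinterTD := take_drop_inter hppath htp
  have hsα : s ∉ α.support := by
    intro hcon
    exact hst (hinterTD s hcon β.end_mem_support)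
  have hsubA : ∀ z, z ∈ α.support → z ∈ C.support := by
    intro z hz
    refine (hmem z).mp ?_
    rw [Walk.support_cons]
    exact List.mem_cons_of_mem _ ((Walk.support_takeUntil_subset p htp) hz)
  have hsubB : ∀ z, z ∈ β.support → z ∈ C.support := by
    intro z hz
    refine (hmem z).mp ?_
    rw [Walk.support_cons]
    exact List.mem_cons_of_mem _ ((Walk.support_dropUntil_subset p htp) hz)
  have hβ1 : 1 ≤ β.length := one_le_length_of_ne (Ne.symm hst) β
  have hc1 : (Q.append β).IsCycle := by
    refine closeCycle hst hQ hβ ?_ ?_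
    · intro z h1 h2
      exact hint z h1 (hsubB z h2)
    · omega
  have hαc : (Walk.cons h₁ α).IsPath := (Walk.cons_isPath_iff _ _).mpr ⟨hα, hsα⟩
  have hc2 : (Q.append (Walk.cons h₁ α).reverse).IsCycle := by
    refine closeCycle hst hQ hαc.reverse ?_ ?_
    · intro z h1 h2
      rw [Walk.support_reverse, List.mem_reverse, Walk.support_cons, List.mem_cons] at h2
      rcases h2 with rfl | h2
      · exact Or.inl rfl
      · exact hint z h1 (hsubA z h2)
    · rw [Walk.length_reverse, Walk.length_cons]
      omega
  have l1 : (Q.append β).length = Q.length + β.length := Walk.length_append _ _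
  have l2 : (Q.append (Walk.cons h₁ α).reverse).length = Q.length + (α.length + 1) := by
    rw [Walk.length_append, Walk.length_reverse, Walk.length_cons]
  have lsplit : α.length + β.length = p.length := by
    have h := congrArg Walk.length (Walk.take_spec p htp)
    rwa [Walk.length_append] at h
  have lC : p.length + 1 = C.length := by
    rw [← hlenC, Walk.length_cons]
  have o1 := hodd s (Q.append β) hc1
  have o2 := hodd s (Q.append (Walk.cons h₁ α).reverse) hc2
  have oC := hodd r C hC
  rw [Nat.not_even_iff_odd] at o1 o2 oC
  obtain ⟨k1, e1⟩ := o1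
  obtain ⟨k2, e2⟩ := o2
  obtain ⟨k3, e3⟩ := oC
  omega

lemma edges_in_G {G : SimpleGraph V} {u v a b : V} (q : (kelmans G u v).Walk a b)
    (hu : u ∉ q.support) : ∀ e ∈ q.edges, e ∈ G.edgeSet := by
  intro e
  induction e using Sym2.ind with
  | _ cc dd =>
    intro he
    have h1 := q.fst_mem_support_of_mem_edges he
    have h2 := q.snd_mem_support_of_mem_edges he
    have hadj := q.adj_of_mem_edges he
    rw [SimpleGraph.mem_edgeSet]
    exact adj_of_ne hadj (fun h => hu (h ▸ h1)) (fun h => hu (h ▸ h2))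

lemma v_not_mem {G : SimpleGraph V} [DecidableEq V] {u v w a b : V} (hne : u ≠ v)
    (hnbrv : ∀ z, (kelmans G u v).Adj v z → z = u ∨ z = w)
    (q : (kelmans G u v).Walk a b) (hq : q.IsPath) (hu : u ∉ q.support)
    (ha : a ≠ v) (hb : b ≠ v) : v ∉ q.support := by
  intro hv
  set tk := q.takeUntil v hv with htk_def
  set dr := q.dropUntil v hv with hdr_def
  have htknn : ¬ tk.reverse.Nil := Walk.not_nil_of_ne (fun h => ha h.symm)
  have hdrnn : ¬ dr.Nil := Walk.not_nil_of_ne (fun h => hb h.symm)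
  obtain ⟨prev, hpe, r₁, hE1⟩ := Walk.not_nil_iff.mp htknn
  obtain ⟨next, hne2, r₂, hE2⟩ := Walk.not_nil_iff.mp hdrnn
  have hprevmem : prev ∈ tk.support := by
    have h : prev ∈ tk.reverse.support := by
      rw [hE1, Walk.support_cons]
      exact List.mem_cons_of_mem _ r₁.start_mem_support
    rwa [Walk.support_reverse, List.mem_reverse] at h
  have hnextmem : next ∈ dr.support.tail := by
    have h : dr.support.tail = r₂.support := by
      rw [hE2, Walk.support_cons, List.tail_cons]
    rw [h]
    exact r₂.start_mem_support
  have hprw : prev = w := by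
    rcases hnbrv prev hpe with rfl | rfl
    · exact absurd ((Walk.support_takeUntil_subset q hv) hprevmem) hu
    · rfl
  have hnxw : next = w := by
    rcases hnbrv next hne2 with rfl | rfl
    · exact absurd ((Walk.support_dropUntil_subset q hv) (List.mem_of_mem_tail hnextmem)) hu
    · rfl
  have hs := hq.support_nodup
  rw [← Walk.take_spec q hv, Walk.support_append, List.nodup_append'] at hs
  exact hs.2.2 (hprw ▸ hprevmem) (hnxw ▸ hnextmem)

lemma mixed_pure {G : SimpleGraph V} [DecidableEq V]
    (hodd : ∀ (z : V) (c : G.Walk z z), c.IsCycle → ¬ Even c.length)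
    {u v w a b : V} (hne : u ≠ v) (huw : G.Adj u w) (hwv : G.Adj w v)
    {S : G.Walk v u} (hS : S.IsPath) (hwS : w ∉ S.support)
    {p : G.Walk a b} (hp : p.IsPath) (hup : u ∉ p.support) (hvp : v ∉ p.support)
    (hva : G.Adj v a) (hnua : ¬ G.Adj u a) (hau : a ≠ u) (hub : G.Adj u b)
    (hbv : b ≠ v) (hab : a ≠ b) (hev : Even (p.length + 2)) : False := by
  have haw : a ≠ w := fun h => hnua (h ▸ huw)
  by_cases hbw : b = w
  · subst hbw
    have hq2p : (Walk.cons hwv (Walk.cons hva Walk.nil)).IsPath := by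
      rw [Walk.cons_isPath_iff, Walk.cons_isPath_iff]
      refine ⟨⟨Walk.IsPath.nil, ?_⟩, ?_⟩
      · simp [hva.ne]
      · simp [Walk.support_cons, Walk.support_nil]
        exact ⟨hwv.ne, fun h => haw h.symm⟩
    have hcyc : (p.append (Walk.cons hwv (Walk.cons hva Walk.nil))).IsCycle := by
      refine closeCycle haw hp hq2p ?_ ?_
      · intro z h1 h2
        simp [Walk.support_cons, Walk.support_nil] at h2
        rcases h2 with rfl | rfl | rfl
        · exact Or.inr rfl
        · exact absurd h1 hvp
        · exact Or.inl rfl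
      · have := one_le_length_of_ne hab p
        simp only [Walk.length_append, Walk.length_cons, Walk.length_nil]
        omega
    refine hodd a _ hcyc ?_
    rw [Walk.length_append]
    simpa using hev
  · by_cases hwp : w ∈ p.support
    · set dp := p.dropUntil w hwp with hdp_def
      have hdp : dp.IsPath := hp.dropUntil hwp
      have hwb : w ≠ b := fun h => hbw h.symm
      have hudp : u ∉ dp.support := fun h => hup ((Walk.support_dropUntil_subset p hwp) h)
      have hvdp : v ∉ dp.support := fun h => hvp ((Walk.support_dropUntil_subset p hwp) h)
      have htlp : (Walk.cons hub.symm (Walk.cons huw Walk.nil)).IsPath := by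
        rw [Walk.cons_isPath_iff, Walk.cons_isPath_iff]
        refine ⟨⟨Walk.IsPath.nil, ?_⟩, ?_⟩
        · simp [huw.ne]
        · simp [Walk.support_cons, Walk.support_nil]
          exact ⟨hub.ne', hwb.symm⟩
      have hBcyc : (dp.append (Walk.cons hub.symm (Walk.cons huw Walk.nil))).IsCycle := by
        refine closeCycle hwb hdp htlp ?_ ?_
        · intro z h1 h2
          simp [Walk.support_cons, Walk.support_nil] at h2
          rcases h2 with rfl | rfl | rfl
          · exact Or.inr rfl
          · exact absurd h1 hudp
          · exact Or.inl rfl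
        · have := one_le_length_of_ne hwb dp
          simp only [Walk.length_append, Walk.length_cons, Walk.length_nil]
          omega
      set B := dp.append (Walk.cons hub.symm (Walk.cons huw Walk.nil)) with hB_def
      have huB : u ∈ B.support := by
        rw [hB_def, Walk.mem_support_append_iff]
        right
        simp [Walk.support_cons]
      have hvB : v ∉ B.support := by
        rw [hB_def, Walk.mem_support_append_iff]
        rintro (h | h)
        · exact hvdp h
        · simp [Walk.support_cons, Walk.support_nil] at h
          rcases h with rfl | rfl | rfl
          · exact hbv rfl
          · exact hne rfl
          · exact hwv.ne' rfl
      obtain ⟨m, Q₀, R, hSeq, hmB, hfirst⟩ := exists_firstHit S {x | x ∈ B.support} huB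
      have hQ₀p : Q₀.IsPath := Walk.IsPath.of_append_left (by rw [← hSeq]; exact hS)
      have hQ₀S : ∀ z, z ∈ Q₀.support → z ∈ S.support := by
        intro z hz
        rw [hSeq, Walk.mem_support_append_iff]
        exact Or.inl hz
      have hwQ₀ : w ∉ Q₀.support := fun h => hwS (hQ₀S w h)
      have hmS : m ∈ S.support := hQ₀S m Q₀.end_mem_support
      have hwm : w ≠ m := fun h => hwS (h ▸ hmS)
      have hQp : (Walk.cons hwv Q₀).IsPath := (Walk.cons_isPath_iff _ _).mpr ⟨hQ₀p, hwQ₀⟩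
      refine ear_lemma hodd B hBcyc (B.start_mem_support) (Walk.cons hwv Q₀) hQp hmB hwm ?_ ?_
      · intro x hx hxB
        rw [Walk.support_cons, List.mem_cons] at hx
        rcases hx with rfl | hx
        · exact Or.inl rfl
        · exact Or.inr (hfirst x hx hxB)
      · rw [Walk.length_cons]
        have hvm : v ≠ m := fun h => hvB (h ▸ hmB)
        have := one_le_length_of_ne hvm Q₀
        omega
    · set q2 : G.Walk a b :=
        Walk.cons hva.symm (Walk.cons hwv.symm (Walk.cons huw.symm (Walk.cons hub Walk.nil)))
        with hq2_def
      have hq2p : q2.IsPath := by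
        rw [hq2_def, Walk.cons_isPath_iff, Walk.cons_isPath_iff, Walk.cons_isPath_iff,
          Walk.cons_isPath_iff]
        refine ⟨⟨⟨⟨Walk.IsPath.nil, ?_⟩, ?_⟩, ?_⟩, ?_⟩
        · simp [hub.ne]
        · simp [Walk.support_cons, Walk.support_nil]
          exact ⟨huw.ne', fun h => hbw h.symm⟩
        · simp [Walk.support_cons, Walk.support_nil]
          exact ⟨hwv.ne', hne.symm, fun h => hbv h.symm⟩
        · simp [Walk.support_cons, Walk.support_nil]
          exact ⟨hva.ne', haw, hau, hab⟩
      have hcyc : (p.reverse.append q2).IsCycle := by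
        refine closeCycle (fun h => hab h.symm) hp.reverse hq2p ?_ ?_
        · intro z h1 h2
          rw [Walk.support_reverse, List.mem_reverse] at h1
          rw [hq2_def] at h2
          simp [Walk.support_cons, Walk.support_nil] at h2
          rcases h2 with rfl | rfl | rfl | rfl | rfl
          · exact Or.inr rfl
          · exact absurd h1 hvp
          · exact absurd h1 hwp
          · exact absurd h1 hup
          · exact Or.inl rfl
        · rw [Walk.length_reverse, hq2_def]
          simp only [Walk.length_append, Walk.length_cons, Walk.length_nil]
          omega
      refine hodd b _ hcyc ?_
      rw [Walk.length_append, Walk.length_reverse, hq2_def]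
      simp only [Walk.length_cons, Walk.length_nil]
      obtain ⟨k, hk⟩ := hev
      exact ⟨k + 1, by omega⟩

lemma mixed_kelmans {G : SimpleGraph V} [DecidableEq V]
    (hodd : ∀ (z : V) (c : G.Walk z z), c.IsCycle → ¬ Even c.length)
    {u v w : V} (hne : u ≠ v) (huw : G.Adj u w) (hwv : G.Adj w v)
    (hnbrv : ∀ z, (kelmans G u v).Adj v z → z = u ∨ z = w)
    {S : G.Walk v u} (hS : S.IsPath) (hwS : w ∉ S.support)
    {a b : V} (q₀ : (kelmans G u v).Walk a b) (hq₀ : q₀.IsPath) (hu₀ : u ∉ q₀.support)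
    (hma : movedNbr G u v a) (hub : G.Adj u b) (hab : a ≠ b)
    (hev : Even (q₀.length + 2)) : False := by
  obtain ⟨hva, hau, hnua⟩ := hma
  have hav : a ≠ v := hva.ne'
  have haw : a ≠ w := fun h => hnua (h ▸ huw)
  by_cases hbv : b = v
  · subst hbv
    have hnn : ¬ q₀.reverse.Nil := Walk.not_nil_of_ne (fun h => hav h.symm)
    obtain ⟨e, he, r₁, hE1⟩ := Walk.not_nil_iff.mp hnn
    have hemem : e ∈ q₀.support := by
      have h : e ∈ q₀.reverse.support := by
        rw [hE1, Walk.support_cons]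
        exact List.mem_cons_of_mem _ r₁.start_mem_support
      rwa [Walk.support_reverse, List.mem_reverse] at h
    have hew : e = w := by
      rcases hnbrv e he with rfl | rfl
      · exact absurd hemem hu₀
      · rfl
    subst hew
    have hrevp : q₀.reverse.IsPath := hq₀.reverse
    rw [hE1, Walk.cons_isPath_iff] at hrevp
    obtain ⟨hr₁p, hvr⟩ := hrevp
    have hur : u ∉ r₁.support := by
      intro h
      apply hu₀
      have h2 : u ∈ q₀.reverse.support := by
        rw [hE1, Walk.support_cons]
        exact List.mem_cons_of_mem _ h
      rwa [Walk.support_reverse, List.mem_reverse] at h2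
    have hedges := edges_in_G r₁ hur
    set p₁ := r₁.transfer G hedges with hp₁_def
    have hp₁ : p₁.IsPath := hr₁p.transfer _
    have hsup₁ : p₁.support = r₁.support := Walk.support_transfer _ _
    have hq2p : (Walk.cons hva.symm (Walk.cons hub.symm (Walk.cons huw Walk.nil))).IsPath := by
      rw [Walk.cons_isPath_iff, Walk.cons_isPath_iff, Walk.cons_isPath_iff]
      refine ⟨⟨⟨Walk.IsPath.nil, ?_⟩, ?_⟩, ?_⟩
      · simp [huw.ne]
      · simp [Walk.support_cons, Walk.support_nil]
        exact ⟨hne.symm, hwv.ne'⟩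
      · simp [Walk.support_cons, Walk.support_nil]
        exact ⟨hav, hau, haw⟩
    have hcyc : (p₁.append
        (Walk.cons hva.symm (Walk.cons hub.symm (Walk.cons huw Walk.nil)))).IsCycle := by
      refine closeCycle (fun h => haw h.symm) hp₁ hq2p ?_ ?_
      · intro z h1 h2
        rw [hsup₁] at h1
        simp [Walk.support_cons, Walk.support_nil] at h2
        rcases h2 with rfl | rfl | rfl | rfl
        · exact Or.inr rfl
        · exact absurd h1 hvr
        · exact absurd h1 hur
        · exact Or.inl rfl
      · simp only [Walk.length_append, Walk.length_cons, Walk.length_nil]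
        omega
    refine hodd _ _ hcyc ?_
    rw [Walk.length_append]
    simp only [Walk.length_cons, Walk.length_nil]
    have hlen : q₀.length = r₁.length + 1 := by
      have h := congrArg Walk.length hE1
      rwa [Walk.length_reverse, Walk.length_cons] at h
    have hlp : p₁.length = r₁.length := Walk.length_transfer _ _
    obtain ⟨k, hk⟩ := hev
    exact ⟨k, by omega⟩
  · have hvq := v_not_mem hne hnbrv q₀ hq₀ hu₀ hav hbv
    have hedges := edges_in_G q₀ hu₀
    have hp : (q₀.transfer G hedges).IsPath := hq₀.transfer _
    have hsup : (q₀.transfer G hedges).support = q₀.support := Walk.support_transfer _ _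
    refine mixed_pure hodd hne huw hwv hS hwS hp ?_ ?_ hva hnua hau hub hbv hab ?_
    · rw [hsup]; exact hu₀
    · rw [hsup]; exact hvq
    · rwa [Walk.length_transfer]

end KelmansProof

/-- If `G` is a connected graph with no even cycle and `u, v` lie at distance `2` along a
common cycle (via the path `u-w-v` on the cycle), then the Kelmans transformation
`KT(G,u,v)` also has no even cycle. -/
theorem kelmans_no_even_cycle {V : Type*} [Fintype V] (G : SimpleGraph V)
    (hconn : G.Connected)
    (hodd : ∀ (z : V) (c : G.Walk z z), c.IsCycle → ¬ Even c.length)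
    (u v w : V) (hne : u ≠ v)
    (c : G.Walk u u) (hc : c.IsCycle)
    (h1 : s(u, w) ∈ c.edges) (h2 : s(w, v) ∈ c.edges) :
    ∀ (z : V) (d : (kelmans G u v).Walk z z), d.IsCycle → ¬ Even d.length := by
  classical
  open SimpleGraph Walk KelmansProof in
  have huw : G.Adj u w := c.adj_of_mem_edges h1
  have hwv : G.Adj w v := c.adj_of_mem_edges h2
  have hcom : ∀ x, G.Adj u x → G.Adj v x → x = w := by
    intro x hux hvx
    by_contra hxw
    have n1 : u ≠ w := huw.ne
    have n2 : w ≠ v := hwv.ne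
    have n3 : v ≠ x := hvx.ne
    have n4 : u ≠ x := hux.ne
    have hKey := hodd u (SimpleGraph.Walk.cons huw (SimpleGraph.Walk.cons hwv
      (SimpleGraph.Walk.cons hvx (SimpleGraph.Walk.cons hux.symm SimpleGraph.Walk.nil)))) ?_
    · exact hKey (by simp only [SimpleGraph.Walk.length_cons, SimpleGraph.Walk.length_nil]; decide)
    · rw [SimpleGraph.Walk.isCycle_def, SimpleGraph.Walk.isTrail_def]
      refine ⟨?_, by simp, ?_⟩
      · simp only [SimpleGraph.Walk.edges_cons, SimpleGraph.Walk.edges_nil, List.nodup_cons,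
          List.mem_cons, List.not_mem_nil, or_false, List.nodup_nil, and_true,
          List.mem_singleton, Sym2.eq_iff]
        push_neg
        tauto
      · simp only [SimpleGraph.Walk.support_cons, SimpleGraph.Walk.support_nil, List.tail_cons,
          List.nodup_cons, List.mem_cons, List.not_mem_nil, or_false, List.nodup_nil, and_true,
          List.mem_singleton]
        push_neg
        tauto
  have hnbrv : ∀ z, (kelmans G u v).Adj v z → z = u ∨ z = w := by
    intro z hz
    rcases KelmansProof.kelmans_adj.mp hz with ⟨hGvz, hnm, -⟩ | ⟨hvu, -⟩ | ⟨rfl, -⟩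
    · by_cases hzu : z = u
      · exact Or.inl hzu
      · have hnm' : ¬ movedNbr G u v z := fun hm => hnm ⟨rfl, hm⟩
        rw [movedNbr] at hnm'
        push_neg at hnm'
        exact Or.inr (hcom z (hnm' hGvz hzu) hGvz)
    · exact absurd hvu hne.symm
    · exact Or.inl rfl
  obtain ⟨S, hS, hwS⟩ : ∃ S : G.Walk v u, S.IsPath ∧ w ∉ S.support := by
    have hwc : w ∈ c.support := c.fst_mem_support_of_mem_edges h2
    have hc' : (c.rotate w hwc).IsCycle := hc.rotate hwc
    have h3 := hc'.three_le_length
    have hnn : ¬ (c.rotate w hwc).Nil := by rw [SimpleGraph.Walk.nil_iff_length_eq]; omega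
    obtain ⟨w₁, hadj, p, hE⟩ := SimpleGraph.Walk.not_nil_iff.mp hnn
    have h1' : s(u, w) ∈ (c.rotate w hwc).edges := ((c.rotate_edges _ hwc).perm.mem_iff).mpr h1
    have h2' : s(w, v) ∈ (c.rotate w hwc).edges := ((c.rotate_edges _ hwc).perm.mem_iff).mpr h2
    rw [hE] at hc' h1' h2'
    rw [SimpleGraph.Walk.cons_isCycle_iff] at hc'
    obtain ⟨hpp, -⟩ := hc'
    have hw₁w : w₁ ≠ w := hadj.ne'
    have hpnn : ¬ p.reverse.Nil := SimpleGraph.Walk.not_nil_of_ne (fun h => hw₁w h.symm)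
    obtain ⟨m₀, hm₀, rr, hEr⟩ := SimpleGraph.Walk.not_nil_iff.mp hpnn
    have hpeq : p = rr.reverse.concat hm₀.symm := by
      have h := congrArg SimpleGraph.Walk.reverse hEr
      rwa [SimpleGraph.Walk.reverse_reverse, SimpleGraph.Walk.reverse_cons] at h
    have hp₀p : rr.reverse.IsPath := by
      have h := hpp
      rw [hpeq, SimpleGraph.Walk.concat_eq_append] at h
      exact h.of_append_left
    have hwp₀ : w ∉ rr.reverse.support := by
      have hnod := hpp.support_nodup
      rw [hpeq, SimpleGraph.Walk.support_concat,
        List.nodup_append'] at hnod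
      exact fun hcon => (hnod.2.2 hcon) (List.mem_singleton.mpr rfl)
    have hu_cases : u = w₁ ∨ u = m₀ := by
      rw [SimpleGraph.Walk.edges_cons, hpeq, SimpleGraph.Walk.edges_concat,
        List.concat_eq_append, List.mem_cons, List.mem_append, List.mem_singleton] at h1'
      rcases h1' with h | h | h
      · rw [Sym2.eq_iff] at h
        rcases h with ⟨h', -⟩ | ⟨h', -⟩
        · exact absurd h' huw.ne
        · exact Or.inl h'
      · exact absurd (SimpleGraph.Walk.snd_mem_support_of_mem_edges _ h) hwp₀
      · rw [Sym2.eq_iff] at h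
        rcases h with ⟨h', -⟩ | ⟨h', -⟩
        · exact Or.inr h'
        · exact absurd h' huw.ne
    have hv_cases : v = w₁ ∨ v = m₀ := by
      rw [SimpleGraph.Walk.edges_cons, hpeq, SimpleGraph.Walk.edges_concat,
        List.concat_eq_append, List.mem_cons, List.mem_append, List.mem_singleton] at h2'
      rcases h2' with h | h | h
      · rw [Sym2.eq_iff] at h
        rcases h with ⟨-, h'⟩ | ⟨h', -⟩
        · exact Or.inl h'
        · exact absurd h'.symm hw₁w
      · exact absurd (SimpleGraph.Walk.fst_mem_support_of_mem_edges _ h) hwp₀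
      · rw [Sym2.eq_iff] at h
        rcases h with ⟨-, h'⟩ | ⟨-, h'⟩
        · exact absurd h' hwv.ne'
        · exact Or.inr h'
    rcases hu_cases with hu1 | hu2 <;> rcases hv_cases with hv1 | hv2
    · exact absurd (hu1.trans hv1.symm) hne
    · subst hu1
      subst hv2
      have hrrp : rr.IsPath := by
        have h := hp₀p.reverse
        rwa [SimpleGraph.Walk.reverse_reverse] at h
      have hwrr : w ∉ rr.support := by
        rwa [SimpleGraph.Walk.support_reverse, List.mem_reverse] at hwp₀
      exact ⟨rr, hrrp, hwrr⟩
    · subst hu2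
      subst hv1
      exact ⟨rr.reverse, hp₀p, hwp₀⟩
    · exact absurd (hu2.trans hv2.symm) hne
  intro z d hd hev
  by_cases hu : u ∈ d.support
  · have hd0 := hd.rotate hu
    have hlen' := KelmansProof.length_rotate d hu
    have h3 := hd0.three_le_length
    have hnn : ¬ (d.rotate u hu).Nil := by rw [SimpleGraph.Walk.nil_iff_length_eq]; omega
    obtain ⟨a, h₁, q, hE⟩ := SimpleGraph.Walk.not_nil_iff.mp hnn
    rw [hE] at hd0 hlen' h3
    have hcyc' := hd0
    rw [SimpleGraph.Walk.cons_isCycle_iff] at hd0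
    obtain ⟨hqp, hqe⟩ := hd0
    have hau : a ≠ u := h₁.ne'
    have hqnn : ¬ q.reverse.Nil := SimpleGraph.Walk.not_nil_of_ne (fun h => hau h.symm)
    obtain ⟨b, h₂, rr, hEr⟩ := SimpleGraph.Walk.not_nil_iff.mp hqnn
    have hqeq : q = rr.reverse.concat h₂.symm := by
      have h := congrArg SimpleGraph.Walk.reverse hEr
      rwa [SimpleGraph.Walk.reverse_reverse, SimpleGraph.Walk.reverse_cons] at h
    have hq₀p : rr.reverse.IsPath := by
      have h := hqp
      rw [hqeq, SimpleGraph.Walk.concat_eq_append] at h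
      exact h.of_append_left
    have huq₀ : u ∉ rr.reverse.support := by
      have hnod := hqp.support_nodup
      rw [hqeq, SimpleGraph.Walk.support_concat,
        List.nodup_append'] at hnod
      exact fun hcon => (hnod.2.2 hcon) (List.mem_singleton.mpr rfl)
    have hlq : q.length = rr.reverse.length + 1 := by
      rw [hqeq, SimpleGraph.Walk.length_concat]
    have hlen2 : rr.reverse.length + 2 = d.length := by
      rw [← hlen', SimpleGraph.Walk.length_cons, hlq]
    have hablen : Even (rr.reverse.length + 2) := by rwa [hlen2]
    have hab : a ≠ b := by
      intro hh
      subst hh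
      have h0 : rr.reverse.length = 0 := KelmansProof.path_loop hq₀p
      rw [SimpleGraph.Walk.length_cons, hlq] at h3
      omega
    rcases KelmansProof.adj_u_cases h₁ with hGua | hma
    · rcases KelmansProof.adj_u_cases h₂ with hGub | hmb
      · have hed : ∀ e ∈ (SimpleGraph.Walk.cons h₁ q).edges, e ∈ G.edgeSet := by
          intro e he
          rw [SimpleGraph.Walk.edges_cons, List.mem_cons] at he
          rcases he with rfl | he
          · exact hGua
          · rw [hqeq, SimpleGraph.Walk.edges_concat, List.concat_eq_append, List.mem_append,
              List.mem_singleton] at he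
            rcases he with he | rfl
            · exact KelmansProof.edges_in_G rr.reverse huq₀ e he
            · exact hGub.symm
        refine hodd u ((SimpleGraph.Walk.cons h₁ q).transfer G hed) (hcyc'.transfer hed) ?_
        rw [SimpleGraph.Walk.length_transfer, hlen']
        exact hev
      · refine KelmansProof.mixed_kelmans hodd hne huw hwv hnbrv hS hwS rr.reverse.reverse
          hq₀p.reverse ?_ hmb hGua (fun h => hab h.symm) ?_
        · rw [SimpleGraph.Walk.support_reverse, List.mem_reverse]
          exact huq₀
        · rwa [SimpleGraph.Walk.length_reverse]
    · rcases KelmansProof.adj_u_cases h₂ with hGub | hmb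
      · exact KelmansProof.mixed_kelmans hodd hne huw hwv hnbrv hS hwS rr.reverse hq₀p huq₀
          hma hGub hab hablen
      · obtain ⟨hva, hau', hnua⟩ := hma
        obtain ⟨hvb, hbu', hnub⟩ := hmb
        have hvq₀ : v ∉ rr.reverse.support :=
          KelmansProof.v_not_mem hne hnbrv rr.reverse hq₀p huq₀ hva.ne' hvb.ne'
        have hedges := KelmansProof.edges_in_G rr.reverse huq₀
        have hpp : ((rr.reverse).transfer G hedges).IsPath := hq₀p.transfer _
        have hsup : ((rr.reverse).transfer G hedges).support = rr.reverse.support :=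
          SimpleGraph.Walk.support_transfer _ _
        have hq2p : (SimpleGraph.Walk.cons hvb.symm
            (SimpleGraph.Walk.cons hva SimpleGraph.Walk.nil)).IsPath := by
          rw [SimpleGraph.Walk.cons_isPath_iff, SimpleGraph.Walk.cons_isPath_iff]
          refine ⟨⟨SimpleGraph.Walk.IsPath.nil, ?_⟩, ?_⟩
          · simp [hva.ne]
          · simp [SimpleGraph.Walk.support_cons, SimpleGraph.Walk.support_nil]
            exact ⟨hvb.ne', fun h => hab h.symm⟩
        have hcyc : (((rr.reverse).transfer G hedges).append
            (SimpleGraph.Walk.cons hvb.symm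
              (SimpleGraph.Walk.cons hva SimpleGraph.Walk.nil))).IsCycle := by
          refine KelmansProof.closeCycle hab hpp hq2p ?_ ?_
          · intro zz hz1 hz2
            rw [hsup] at hz1
            simp [SimpleGraph.Walk.support_cons, SimpleGraph.Walk.support_nil] at hz2
            rcases hz2 with rfl | rfl | rfl
            · exact Or.inr rfl
            · exact absurd hz1 hvq₀
            · exact Or.inl rfl
          · have := KelmansProof.one_le_length_of_ne hab ((rr.reverse).transfer G hedges)
            simp only [SimpleGraph.Walk.length_cons, SimpleGraph.Walk.length_nil]
            omega
        refine hodd a _ hcyc ?_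
        rw [SimpleGraph.Walk.length_append, SimpleGraph.Walk.length_transfer]
        simpa using hablen
  · exact hodd z (d.transfer G (KelmansProof.edges_in_G d hu)) (hd.transfer _)
      (by rwa [SimpleGraph.Walk.length_transfer])
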